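/- Let Σ be a p×p real positive definite matrix, let β_T, β_C ∈ ℝ^p, and let n_T, n_C be positive real numbers with N = n_T + n_C. Then equality (1/n_T)·β_Tᵀ Σ β_T + (1/n_C)·β_Cᵀ Σ β_C = (1/N)·(β_T − β_C)ᵀ Σ (β_T − β_C) holds if and only if β_C = −(n_C/n_T)·β_T. -/
import Mathlib


open Matrix

/-- equality case of Theorem 4.5. For a positive definite
`p × p` real matrix `Σ`, equality
`(1/nT)·βTᵀ Σ βT + (1/nC)·βCᵀ Σ βC = (1/N)·(βT − βC)ᵀ Σ (βT − βC)`
holds iff `βC = −(nC/nT)·βT`. -/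
theorem avar_equality_iff
    {p : ℕ} (S : Matrix (Fin p) (Fin p) ℝ)
    (hSym : Sᵀ = S)
    (hPD : ∀ v : Fin p → ℝ, v ≠ 0 → 0 < v ⬝ᵥ (S *ᵥ v))
    (βT βC : Fin p → ℝ) (nT nC N : ℝ)
    (hnT : 0 < nT) (hnC : 0 < nC) (hN : N = nT + nC) :
    (1 / nT) * (βT ⬝ᵥ (S *ᵥ βT)) + (1 / nC) * (βC ⬝ᵥ (S *ᵥ βC)) =
      (1 / N) * ((βT - βC) ⬝ᵥ (S *ᵥ (βT - βC))) ↔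
      βC = -(nC / nT) • βT := by
  have hN0 : 0 < N := by rw [hN]; positivity
  have hsymm : ∀ x y : Fin p → ℝ, x ⬝ᵥ S *ᵥ y = y ⬝ᵥ S *ᵥ x := by
    intro x y
    nth_rewrite 1 [← hSym]
    rw [Matrix.dotProduct_mulVec, Matrix.vecMul_transpose, dotProduct_comm]
  set w : Fin p → ℝ := nC • βT + nT • βC with hwdef
  have hw : w ⬝ᵥ S *ᵥ w =
      nC^2 * (βT ⬝ᵥ S *ᵥ βT) + 2*nC*nT*(βT ⬝ᵥ S *ᵥ βC) + nT^2 * (βC ⬝ᵥ S *ᵥ βC) := by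
    simp only [hwdef, Matrix.mulVec_add, Matrix.mulVec_smul, dotProduct_add,
      add_dotProduct, smul_dotProduct, dotProduct_smul, smul_eq_mul, hsymm βC βT]
    ring
  have hd : (βT - βC) ⬝ᵥ S *ᵥ (βT - βC) =
      (βT ⬝ᵥ S *ᵥ βT) - 2*(βT ⬝ᵥ S *ᵥ βC) + (βC ⬝ᵥ S *ᵥ βC) := by
    simp only [sub_eq_add_neg, Matrix.mulVec_add, Matrix.mulVec_neg, dotProduct_add,
      add_dotProduct, neg_dotProduct, dotProduct_neg, hsymm βC βT]
    ring
  have key : (1 / nT) * (βT ⬝ᵥ (S *ᵥ βT)) + (1 / nC) * (βC ⬝ᵥ (S *ᵥ βC)) -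
      (1 / N) * ((βT - βC) ⬝ᵥ (S *ᵥ (βT - βC))) = (1/(nT*nC*N)) * (w ⬝ᵥ S *ᵥ w) := by
    rw [hw, hd, hN]
    field_simp
    ring
  constructor
  · intro h
    have hq : w ⬝ᵥ S *ᵥ w = 0 := by
      have : (1/(nT*nC*N)) * (w ⬝ᵥ S *ᵥ w) = 0 := by rw [← key]; linarith
      have hne : (1/(nT*nC*N)) ≠ 0 := by positivity
      exact (mul_eq_zero.mp this).resolve_left hne
    have hw0 : w = 0 := by
      by_contra hne
      exact absurd hq (ne_of_gt (hPD w hne))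
    funext i
    have := congrFun hw0 i
    simp only [hwdef, Pi.add_apply, Pi.smul_apply, smul_eq_mul, Pi.zero_apply] at this
    simp only [Pi.smul_apply, Pi.neg_apply, smul_eq_mul, neg_mul]
    field_simp
    linarith
  · intro h
    have hw0 : w = 0 := by
      funext i
      simp only [hwdef, h, Pi.add_apply, Pi.smul_apply, Pi.neg_apply, smul_eq_mul,
        Pi.zero_apply]
      field_simp
      ring
    have : w ⬝ᵥ S *ᵥ w = 0 := by simp [hw0]
    rw [this, mul_zero, sub_eq_zero] at key
    exact key
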